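/- For any constants g > 0, B > 0 and p_max ∈ ℝ, the set {(γ, τ) ∈ ℝ × ℝ : τ > 0 and τ · (1/√g) · exp(γ · ln 2 / (B · τ)) ≤ τ · p_max} is a convex subset of ℝ². -/

import Mathlib

/-- The per-link power constraint set of (OPT-2),
`{(γ, τ) | τ > 0 ∧ τ · (1/√g) · exp (γ · ln 2 / (B · τ)) ≤ τ · p_max}`,
is convex, for any `g > 0`, `B > 0` and `p_max ∈ ℝ`. -/
theorem fso_power_constraint_set_convex (g B pmax : ℝ) (hg : 0 < g) (hB : 0 < B) :
    Convex ℝ {p : ℝ × ℝ |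
      0 < p.2 ∧
        p.2 * ((1 / Real.sqrt g) * Real.exp (p.1 * Real.log 2 / (B * p.2)))
          ≤ p.2 * pmax} := by
  have hc : 0 < 1 / Real.sqrt g := by positivity
  intro p hp q hq a b ha hb hab
  obtain ⟨hpt, hpe⟩ := hp
  obtain ⟨hqt, hqe⟩ := hq
  have ht : 0 < a * p.2 + b * q.2 := by
    rcases ha.lt_or_eq with h | h
    · nlinarith
    · nlinarith
  set c := 1 / Real.sqrt g with hcdef
  set t := a * p.2 + b * q.2 with htdef
  set u₁ := p.1 * Real.log 2 / (B * p.2) with hu1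
  set u₂ := q.1 * Real.log 2 / (B * q.2) with hu2
  have hl1 : (0:ℝ) ≤ a * p.2 / t := by positivity
  have hl2 : (0:ℝ) ≤ b * q.2 / t := by positivity
  have hsum : a * p.2 / t + b * q.2 / t = 1 := by
    field_simp
    exact htdef.symm
  have hE := convexOn_exp.2 (Set.mem_univ u₁) (Set.mem_univ u₂) hl1 hl2 hsum
  simp only [smul_eq_mul] at hE
  have harg : a * p.2 / t * u₁ + b * q.2 / t * u₂
      = (a * p.1 + b * q.1) * Real.log 2 / (B * t) := by
    rw [hu1, hu2]
    field_simp
  rw [harg] at hE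
  set X := (a * p.1 + b * q.1) * Real.log 2 / (B * t) with hX
  have hE2 : t * Real.exp X ≤ a * p.2 * Real.exp u₁ + b * q.2 * Real.exp u₂ := by
    have h := mul_le_mul_of_nonneg_left hE ht.le
    have heq : t * (a * p.2 / t * Real.exp u₁ + b * q.2 / t * Real.exp u₂)
        = a * p.2 * Real.exp u₁ + b * q.2 * Real.exp u₂ := by
      field_simp
    linarith [heq ▸ h]
  refine ⟨ht, ?_⟩
  have hfst : (a • p + b • q).1 = a * p.1 + b * q.1 := by simp [smul_eq_mul]
  have hsnd : (a • p + b • q).2 = a * p.2 + b * q.2 := by simp [smul_eq_mul]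
  rw [hfst, hsnd, ← htdef, ← hX]
  calc t * (c * Real.exp X) = c * (t * Real.exp X) := by ring
    _ ≤ c * (a * p.2 * Real.exp u₁ + b * q.2 * Real.exp u₂) :=
        mul_le_mul_of_nonneg_left hE2 hc.le
    _ = a * (p.2 * (c * Real.exp u₁)) + b * (q.2 * (c * Real.exp u₂)) := by ring
    _ ≤ a * (p.2 * pmax) + b * (q.2 * pmax) :=
        add_le_add (mul_le_mul_of_nonneg_left hpe ha) (mul_le_mul_of_nonneg_left hqe hb)
    _ = t * pmax := by rw [htdef]; ring
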